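/- arXiv:2102.03181 — 4 statements merged into one kernel-verified Lean document; each statement's English description precedes it below -/
import Mathlib

section
/- Let C be a category with a faithful representable functor Q : C → Set represented by (A₀, x₀), and suppose for every object A there exists a morphism α : A → A₀ with Q(α) surjective. Let Φ be an automorphism of C. Then there exists an epimorphism η : A₀ → Φ(A₀). -/
open CategoryTheory

/-- If `Q : C ⥤ Type` is faithful, represented by `(A₀, x₀)`, every object admits a
morphism to `A₀` with surjective underlying map, and `Φ` is a strict automorphism of `C`
(with strict inverse `Ψ`), then there exists an epimorphism `η : A₀ ⟶ Φ(A₀)`. -/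
theorem stmt_3 {C : Type*} [Category C] (Q : C ⥤ Type*) [Q.Faithful]
    (A₀ : C) (x₀ : Q.obj A₀)
    (hrep : ∀ (A : C) (a : Q.obj A), ∃! α : A₀ ⟶ A, Q.map α x₀ = a)
    (hsurj : ∀ A : C, ∃ f : A ⟶ A₀, Function.Surjective (Q.map f))
    (Φ Ψ : C ⥤ C) (hΦΨ : Φ ⋙ Ψ = 𝟭 C) (hΨΦ : Ψ ⋙ Φ = 𝟭 C) :
    ∃ η : A₀ ⟶ Φ.obj A₀, Epi η := by
  obtain ⟨f, hf⟩ := hsurj (Ψ.obj A₀)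
  -- f is epi since Q is faithful and Q.map f is surjective
  have hepi : Epi f := by
    constructor
    intro Z u v huv
    apply Q.map_injective
    ext x
    obtain ⟨y, rfl⟩ := hf x
    have := congrArg (fun g => Q.map g y) huv
    simpa [FunctorToTypes.map_comp_apply] using this
  -- Φ is an equivalence
  let e : C ≌ C := CategoryTheory.Equivalence.mk Φ Ψ (eqToIso hΦΨ.symm) (eqToIso hΨΦ)
  haveI : Φ.IsEquivalence := e.isEquivalence_functor
  haveI : Epi (Φ.map f) := Φ.map_epi f
  have hobj : A₀ = Φ.obj (Ψ.obj A₀) := by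
    rw [← Functor.comp_obj, hΨΦ, Functor.id_obj]
  refine ⟨eqToHom hobj ≫ Φ.map f, ?_⟩
  exact epi_comp _ _
end

section
/- Let C be a category with faithful functor Q : C → Set represented by (A₀, x₀), and suppose for every object A there is a morphism α : A → A₀ with Q(α) surjective. Let Φ be an automorphism of C. Define, for each object A and each a ∈ Q(A), s_A(a) = Q(Φ(α_a) ∘ η)(x₀), where α_a : A₀ → A is the unique morphism with Q(α_a)(x₀) = a and η : A₀ → Φ(A₀) is a fixed epimorphism of the form Φ(η₀) with η₀ : Φ⁻¹(A₀) → A₀ having Q(η₀) surjective. Then each map s_A : Q(A) → Q(Φ(A)) is injective. -/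
open CategoryTheory

/-- Setup: `Q : C ⥤ Type` faithful, represented by `(A₀, x₀)` via the choice of unique
morphisms `α A a : A₀ ⟶ A`; every object admits a morphism to `A₀` with surjective
underlying map; `Φ` a strict automorphism of `C` with strict inverse `Ψ`;
`η₀ : Ψ(A₀) ⟶ A₀` with `Q(η₀)` surjective and `η := Φ(η₀) : A₀ ⟶ Φ(A₀)`.
Then the main function `s_A : a ↦ Q(Φ(α_a) ∘ η)(x₀)` is injective. -/
theorem stmt_4 {C : Type*} [Category C] (Q : C ⥤ Type*) [Q.Faithful]
    (A₀ : C) (x₀ : Q.obj A₀)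
    (α : ∀ (A : C), Q.obj A → (A₀ ⟶ A))
    (hα : ∀ (A : C) (a : Q.obj A), Q.map (α A a) x₀ = a)
    (huniq : ∀ (A : C) (a : Q.obj A) (β : A₀ ⟶ A), Q.map β x₀ = a → β = α A a)
    (hsurj : ∀ A : C, ∃ f : A ⟶ A₀, Function.Surjective (Q.map f))
    (Φ Ψ : C ⥤ C) (hΦΨ : Φ ⋙ Ψ = 𝟭 C) (hΨΦ : Ψ ⋙ Φ = 𝟭 C)
    (η₀ : Ψ.obj A₀ ⟶ A₀) (hη₀ : Function.Surjective (Q.map η₀))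
    (A : C) :
    Function.Injective (fun a : Q.obj A =>
      Q.map (eqToHom ((Functor.congr_obj hΨΦ A₀).symm) ≫ Φ.map η₀ ≫ Φ.map (α A a)) x₀) := by
  intro a b h
  simp only at h
  -- both sides are morphisms A₀ ⟶ Φ.obj A sending x₀ to the same element
  have key : eqToHom ((Functor.congr_obj hΨΦ A₀).symm) ≫ Φ.map η₀ ≫ Φ.map (α A a)
      = eqToHom ((Functor.congr_obj hΨΦ A₀).symm) ≫ Φ.map η₀ ≫ Φ.map (α A b) := by
    rw [huniq _ _ _ h]; exact (huniq _ _ _ rfl).symm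
  have key2 : Φ.map (η₀ ≫ α A a) = Φ.map (η₀ ≫ α A b) := by
    have := (cancel_epi (eqToHom ((Functor.congr_obj hΨΦ A₀).symm))).mp key
    simpa using this
  -- Φ is faithful since Φ ⋙ Ψ = 𝟭
  have key3 : η₀ ≫ α A a = η₀ ≫ α A b := by
    have h1 := Functor.congr_hom hΦΨ (η₀ ≫ α A a)
    have h2 := Functor.congr_hom hΦΨ (η₀ ≫ α A b)
    have : Ψ.map (Φ.map (η₀ ≫ α A a)) = Ψ.map (Φ.map (η₀ ≫ α A b)) := by rw [key2]
    simp only [Functor.comp_map] at h1 h2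
    rw [h1, h2] at this
    simp only [← Category.assoc] at this
    have := (cancel_mono _).mp this
    exact (cancel_epi _).mp this
  -- use surjectivity of Q.map η₀ to find a preimage of x₀
  obtain ⟨y, hy⟩ := hη₀ x₀
  have := congrArg (fun f => Q.map f y) key3
  simp only [Functor.map_comp, types_comp_apply, hy, hα] at this
  exact this
end

section
/- With the setup of the previous statement (s_A(a) = Q(Φ(α_a) ∘ η)(x₀)), for every morphism μ : A → B in C the square commutes: Q(Φ(μ)) ∘ s_A = s_B ∘ Q(μ). -/
open CategoryTheory

/-- With the setup of the main function `s_A(a) = Q(Φ(α_a) ∘ η)(x₀)`,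
where `η = Φ(η₀)` with `Q(η₀)` surjective, for every morphism `μ : A ⟶ B`
the square commutes: `Q(Φ(μ)) ∘ s_A = s_B ∘ Q(μ)`. -/
theorem stmt_5 {C : Type*} [Category C] (Q : C ⥤ Type*) [Q.Faithful]
    (A₀ : C) (x₀ : Q.obj A₀)
    (α : ∀ (A : C), Q.obj A → (A₀ ⟶ A))
    (hα : ∀ (A : C) (a : Q.obj A), Q.map (α A a) x₀ = a)
    (huniq : ∀ (A : C) (a : Q.obj A) (β : A₀ ⟶ A), Q.map β x₀ = a → β = α A a)
    (hsurj : ∀ A : C, ∃ f : A ⟶ A₀, Function.Surjective (Q.map f))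
    (Φ Ψ : C ⥤ C) (hΦΨ : Φ ⋙ Ψ = 𝟭 C) (hΨΦ : Ψ ⋙ Φ = 𝟭 C)
    (η₀ : Ψ.obj A₀ ⟶ A₀) (hη₀ : Function.Surjective (Q.map η₀))
    (s : ∀ (A : C), Q.obj A → Q.obj (Φ.obj A))
    (hs : ∀ (A : C) (a : Q.obj A),
      s A a = Q.map (eqToHom ((Functor.congr_obj hΨΦ A₀).symm) ≫ Φ.map η₀ ≫ Φ.map (α A a)) x₀)
    {A B : C} (μ : A ⟶ B) (a : Q.obj A) :
    Q.map (Φ.map μ) (s A a) = s B (Q.map μ a) := by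
  have hcomp : α B (Q.map μ a) = α A a ≫ μ := by
    refine (huniq B (Q.map μ a) (α A a ≫ μ) ?_).symm
    rw [Q.map_comp, types_comp_apply, hα]
  rw [hs, hs, hcomp]
  simp [FunctorToTypes.map_comp_apply]
end

section
/- With the setup of the main function s_A, the family s is a 'C-bijection family' in the following sense: for every object A and any two morphisms γ, δ : Φ(A) → B in C, if Q(γ) ∘ s_A = Q(δ) ∘ s_A then γ = δ. -/
open CategoryTheory

/-- With the setup of the main function `s_A(a) = Q(Φ(α_a) ∘ η)(x₀)` (`η : A₀ ⟶ Φ(A₀)`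
an epimorphism), the family `s` is a `C`-bijection family: for every object `A` and any
two morphisms `γ, δ : Φ(A) ⟶ B`, if `Q(γ) ∘ s_A = Q(δ) ∘ s_A` then `γ = δ`. -/
theorem stmt_6 {C : Type*} [Category C] (Q : C ⥤ Type*) [Q.Faithful]
    (A₀ : C) (x₀ : Q.obj A₀)
    (α : ∀ (A : C), Q.obj A → (A₀ ⟶ A))
    (hα : ∀ (A : C) (a : Q.obj A), Q.map (α A a) x₀ = a)
    (huniq : ∀ (A : C) (a : Q.obj A) (β : A₀ ⟶ A), Q.map β x₀ = a → β = α A a)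
    (hsurj : ∀ A : C, ∃ f : A ⟶ A₀, Function.Surjective (Q.map f))
    (Φ Ψ : C ⥤ C) (hΦΨ : Φ ⋙ Ψ = 𝟭 C) (hΨΦ : Ψ ⋙ Φ = 𝟭 C)
    (η : A₀ ⟶ Φ.obj A₀) (hη : Epi η)
    (s : ∀ (A : C), Q.obj A → Q.obj (Φ.obj A))
    (hs : ∀ (A : C) (a : Q.obj A), s A a = Q.map (η ≫ Φ.map (α A a)) x₀)
    (A B : C) (γ δ : Φ.obj A ⟶ B)
    (h : ∀ a : Q.obj A, Q.map γ (s A a) = Q.map δ (s A a)) :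
    γ = δ := by
  have key : ∀ a : Q.obj A, Φ.map (α A a) ≫ γ = Φ.map (α A a) ≫ δ := by
    intro a
    rw [← cancel_epi η, ← Category.assoc, ← Category.assoc]
    have h1 : Q.map ((η ≫ Φ.map (α A a)) ≫ γ) x₀ = Q.map γ (s A a) := by
      rw [hs]; simp
    have h2 : Q.map ((η ≫ Φ.map (α A a)) ≫ δ) x₀ = Q.map δ (s A a) := by
      rw [hs]; simp
    rw [huniq _ _ _ h1, huniq _ _ _ h2, h a]
  have eA : A = Ψ.obj (Φ.obj A) := (Functor.congr_obj hΦΨ A).symm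
  have e0 : Ψ.obj (Φ.obj A₀) = A₀ := Functor.congr_obj hΦΨ A₀
  have key2 : ∀ a : Q.obj A,
      α A a ≫ eqToHom eA ≫ Ψ.map γ = α A a ≫ eqToHom eA ≫ Ψ.map δ := by
    intro a
    have := congrArg Ψ.map (key a)
    simp only [Functor.map_comp, ← Functor.comp_map] at this
    rw [Functor.congr_hom hΦΨ (α A a)] at this
    simp only [Functor.id_map, Category.assoc, eqToHom_trans] at this
    have := (cancel_epi (eqToHom (Functor.congr_obj hΦΨ A₀))).mp this
    simpa using this
  have key3 : eqToHom eA ≫ Ψ.map γ = eqToHom eA ≫ Ψ.map δ := by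
    apply Q.map_injective
    ext a
    have := congrArg (fun f => Q.map f x₀) (key2 a)
    simpa [hα] using this
  have key4 : Ψ.map γ = Ψ.map δ := by
    rwa [cancel_epi (eqToHom eA)] at key3
  have := congrArg Φ.map key4
  rw [show Φ.map (Ψ.map γ) = (Ψ ⋙ Φ).map γ from rfl,
    show Φ.map (Ψ.map δ) = (Ψ ⋙ Φ).map δ from rfl,
    Functor.congr_hom hΨΦ γ, Functor.congr_hom hΨΦ δ] at this
  rw [cancel_epi, cancel_mono] at this
  exact this
end
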